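/- Reversibility of the i-SIR marginal kernel: let π(dy)Λ_N(y, dx¹:ᴺ) = 𝛑_N(dx¹:ᴺ)Φ_N(x¹:ᴺ, dy) (the duality identity). Then the kernel P_N = Λ_N Φ_N on X satisfies the detailed balance relation ∫∫ g(y)h(ȳ) π(dy) P_N(y, dȳ) = ∫∫ g(y)h(ȳ) π(dȳ) P_N(ȳ, dy) for all nonnegative measurable g, h; in particular π is P_N-invariant. -/

import Mathlib

open MeasureTheory ProbabilityTheory
open scoped ENNReal

lemma snd_compProd_eq_bind {α β : Type*} [MeasurableSpace α] [MeasurableSpace β]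
    (μ : Measure α) [SFinite μ] (κ : Kernel α β) [IsSFiniteKernel κ] :
    (μ.compProd κ).snd = μ.bind κ := by
  ext s hs
  rw [Measure.snd_apply hs, Measure.compProd_apply (measurable_snd hs),
    Measure.bind_apply hs (Kernel.measurable κ).aemeasurable]
  rfl

/-- Reversibility of the i-SIR marginal kernel `P_N = Φ_N ∘ Λ_N` w.r.t. `π`, given
the duality identity `π ⊗ Λ_N = swap_*(𝛑_N ⊗ Φ_N)`, and invariance of `π`. -/
theorem isir_reversibility
    {X : Type*} [MeasurableSpace X] (N : ℕ)
    (π : Measure X) [IsProbabilityMeasure π]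
    (πN : Measure (Fin N → X)) [IsProbabilityMeasure πN]
    (Λ : Kernel X (Fin N → X)) [IsMarkovKernel Λ]
    (Φ : Kernel (Fin N → X) X) [IsMarkovKernel Φ]
    (hdual : π.compProd Λ = (πN.compProd Φ).map Prod.swap) :
    (∀ g h : X → ℝ≥0∞, Measurable g → Measurable h →
        ∫⁻ y, g y * ∫⁻ yb, h yb ∂((Φ ∘ₖ Λ) y) ∂π
          = ∫⁻ yb, (∫⁻ y, g y ∂((Φ ∘ₖ Λ) yb)) * h yb ∂π) ∧
    π.bind (fun y => (Φ ∘ₖ Λ) y) = π := by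
  -- key symmetric formula
  have key : ∀ g h : X → ℝ≥0∞, Measurable g → Measurable h →
      ∫⁻ y, g y * ∫⁻ yb, h yb ∂((Φ ∘ₖ Λ) y) ∂π
        = ∫⁻ x, (∫⁻ y, g y ∂(Φ x)) * ∫⁻ y, h y ∂(Φ x) ∂πN := by
    intro g h hg hh
    have hH : Measurable fun x => ∫⁻ y, h y ∂(Φ x) :=
      Measurable.lintegral_kernel (κ := Φ) hh
    have hG : Measurable fun x => ∫⁻ y, g y ∂(Φ x) :=
      Measurable.lintegral_kernel (κ := Φ) hg
    calc ∫⁻ y, g y * ∫⁻ yb, h yb ∂((Φ ∘ₖ Λ) y) ∂π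
        = ∫⁻ y, g y * ∫⁻ x, (∫⁻ yb, h yb ∂(Φ x)) ∂(Λ y) ∂π := by
          congr 1; ext y
          rw [Kernel.comp_apply, Measure.lintegral_bind (Kernel.measurable Φ).aemeasurable hh.aemeasurable]
      _ = ∫⁻ y, ∫⁻ x, g y * (∫⁻ yb, h yb ∂(Φ x)) ∂(Λ y) ∂π := by
          congr 1; ext y
          rw [lintegral_const_mul _ hH]
      _ = ∫⁻ p : X × (Fin N → X), g p.1 * (∫⁻ yb, h yb ∂(Φ p.2)) ∂(π.compProd Λ) := by
          have hf : Measurable fun p : X × (Fin N → X) => g p.1 * ∫⁻ yb, h yb ∂(Φ p.2) :=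
            (hg.comp measurable_fst).mul (hH.comp measurable_snd)
          rw [Measure.lintegral_compProd hf]
      _ = ∫⁻ q : (Fin N → X) × X, g q.2 * (∫⁻ yb, h yb ∂(Φ q.1)) ∂(πN.compProd Φ) := by
          have hf : Measurable fun p : X × (Fin N → X) => g p.1 * ∫⁻ yb, h yb ∂(Φ p.2) :=
            (hg.comp measurable_fst).mul (hH.comp measurable_snd)
          rw [hdual, lintegral_map hf measurable_swap]
          rfl
      _ = ∫⁻ x, ∫⁻ y, g y * (∫⁻ yb, h yb ∂(Φ x)) ∂(Φ x) ∂πN := by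
          have hf : Measurable fun q : (Fin N → X) × X => g q.2 * ∫⁻ yb, h yb ∂(Φ q.1) :=
            (hg.comp measurable_snd).mul (hH.comp measurable_fst)
          rw [Measure.lintegral_compProd hf]
      _ = ∫⁻ x, (∫⁻ y, g y ∂(Φ x)) * ∫⁻ y, h y ∂(Φ x) ∂πN := by
          congr 1; ext x
          rw [lintegral_mul_const _ hg]
  constructor
  · intro g h hg hh
    rw [key g h hg hh]
    have : ∫⁻ yb, (∫⁻ y, g y ∂((Φ ∘ₖ Λ) yb)) * h yb ∂π
        = ∫⁻ yb, h yb * ∫⁻ y, g y ∂((Φ ∘ₖ Λ) yb) ∂π := by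
      simp_rw [mul_comm]
    rw [this, key h g hh hg]
    simp_rw [mul_comm]
  · -- invariance
    have hΛ : π.bind Λ = πN := by
      rw [← snd_compProd_eq_bind, hdual, Measure.snd_map_swap, Measure.fst_compProd]
    have hΦ : πN.bind Φ = π := by
      rw [← snd_compProd_eq_bind]
      have : πN.compProd Φ = (π.compProd Λ).map Prod.swap := by
        rw [hdual, Measure.map_map measurable_swap measurable_swap]
        simp [Prod.swap_swap_eq]
      rw [this, Measure.snd_map_swap, Measure.fst_compProd]
    have hcomp : π.bind (fun y => (Φ ∘ₖ Λ) y) = (π.bind Λ).bind Φ := by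
      simp_rw [Kernel.comp_apply]
      rw [Measure.bind_bind (Kernel.measurable Λ).aemeasurable (Kernel.measurable Φ).aemeasurable]
    rw [hcomp, hΛ, hΦ]
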